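/- Let f: C[x,y,z] → C[λ] correspond to the morphism A³ → P¹, (x,y,z) ↦ [(xz−y²)x² + 1 : (xz−y²)³]. Then the subring C[xz−y², x] of C[x,y,z] equals the kernel of the locally nilpotent C[x]-derivation ∂ = x∂_y + 2y∂_z of C[x,y,z], and f factors as the composition of the quotient morphism ρ: A³ → A² = Spec(C[u,v]), (x,y,z) ↦ (xz−y², x), with h: A² → P¹, (u,v) ↦ [uv² + 1 : u³]. -/

import Mathlib

open AlgebraicGeometry CategoryTheory CategoryTheory.Limits

universe u

noncomputable section

namespace Paper

/-- `Spec k` as a scheme. -/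
def SpecK (k : Type u) [CommRing k] : Scheme.{u} := Spec (CommRingCat.of k)

/-- The affine line `𝔸¹_k`. -/
def A1 (k : Type u) [CommRing k] : Scheme.{u} := Spec (CommRingCat.of (Polynomial k))

/-- The structure morphism of the affine line. -/
def A1str (k : Type u) [CommRing k] : A1 k ⟶ SpecK k :=
  Spec.map (CommRingCat.ofHom (algebraMap k (Polynomial k)))

/-- Base change of a `k`-scheme along a ring homomorphism `k →+* k'`. -/
def baseChange {k k' : Type u} [CommRing k] [CommRing k'] (φ : k →+* k')
    {X : Scheme.{u}} (p : X ⟶ SpecK k) : Scheme.{u} :=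
  pullback p (Spec.map (CommRingCat.ofHom φ))

/-- The structure morphism of a base change. -/
def baseChangeStr {k k' : Type u} [CommRing k] [CommRing k'] (φ : k →+* k')
    {X : Scheme.{u}} (p : X ⟶ SpecK k) : baseChange φ p ⟶ SpecK k' :=
  pullback.snd p (Spec.map (CommRingCat.ofHom φ))

/-- The scheme-theoretic fiber of `f : X ⟶ S` over a point `s ∈ S`. -/
def fiberOver {X S : Scheme.{u}} (f : X ⟶ S) (s : S) : Scheme.{u} :=
  pullback f (S.fromSpecResidueField s)

/-- The structure morphism of a fiber over the residue field. -/
def fiberOverStr {X S : Scheme.{u}} (f : X ⟶ S) (s : S) :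
    fiberOver f s ⟶ Spec (S.residueField s) :=
  pullback.snd f (S.fromSpecResidueField s)

/-- A morphism of schemes is an `𝔸¹`-fibration if it is surjective and its generic
fiber is isomorphic to the affine line over the residue field of the generic point
(the function field of the base). -/
def IsA1Fibration {X C : Scheme.{u}} (ρ : X ⟶ C) : Prop :=
  Function.Surjective ρ.base ∧
    ∃ hC : IrreducibleSpace C,
      Nonempty (fiberOver ρ (@genericPoint C _ _ hC) ≅
        A1 (C.residueField (@genericPoint C _ _ hC)))

/-- A scheme is normal if all its local rings are integrally closed domains. -/
def NormalScheme (X : Scheme.{u}) : Prop :=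
  ∀ x : X, ∃ _ : IsDomain (X.presheaf.stalk x), IsIntegrallyClosed (X.presheaf.stalk x)

/-- Geometric connectedness of a `k`-scheme: the base change to an algebraic closure
of `k` is a connected space. -/
def GeomConnected (k : Type u) [Field k] {X : Scheme.{u}} (p : X ⟶ SpecK k) : Prop :=
  ConnectedSpace (baseChange (algebraMap k (AlgebraicClosure k)) p)

/-- Geometric integrality. -/
def GeomIntegral (k : Type u) [Field k] {X : Scheme.{u}} (p : X ⟶ SpecK k) : Prop :=
  IsIntegral (baseChange (algebraMap k (AlgebraicClosure k)) p)

/-- Negativity of the logarithmic Kodaira dimension of a smooth variety over `k`,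
expressed through the characterization of Keel–McKernan/Miyanishi–Sugie (which, in
characteristic zero and for smooth affine curves and surfaces, is equivalent to the
vanishing of all the spaces of log-pluricanonical forms on a smooth complete model
with SNC boundary): the base change of `X` to an algebraic closure of `k` is
generically covered by images of nonconstant morphisms from the affine line. -/
def NegLogKodaira (k : Type u) [Field k] {X : Scheme.{u}} (p : X ⟶ SpecK k) : Prop :=
  Dense {x : baseChange (algebraMap k (AlgebraicClosure k)) p |
    ∃ f : A1 (AlgebraicClosure k) ⟶ baseChange (algebraMap k (AlgebraicClosure k)) p,
      f ≫ baseChangeStr (algebraMap k (AlgebraicClosure k)) p = A1str (AlgebraicClosure k) ∧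
      ¬ (∃ x₀, ∀ a, f.base a = x₀) ∧ x ∈ Set.range f.base}

/-- The morphism induced on base changes by a morphism over `Spec k`. -/
def baseChangeHom {k k' : Type u} [CommRing k] [CommRing k'] (φ : k →+* k')
    {X C : Scheme.{u}} (p : X ⟶ SpecK k) (q : C ⟶ SpecK k) (ρ : X ⟶ C) (h : ρ ≫ q = p) :
    baseChange φ p ⟶ baseChange φ q :=
  pullback.map p (Spec.map (CommRingCat.ofHom φ)) q (Spec.map (CommRingCat.ofHom φ))
    ρ (𝟙 _) (𝟙 _) (by rw [h, Category.comp_id]) (by exact (Category.comp_id _).trans (Category.id_comp _).symm)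

/-- `X` is `𝔸¹`-ruled over `k`: it contains a dense open subset of the form
`Z × 𝔸¹` for a smooth curve `Z` over `k`. -/
def IsA1Ruled (k : Type u) [Field k] {X : Scheme.{u}} (p : X ⟶ SpecK k) : Prop :=
  ∃ (Z : Scheme.{u}) (q : Z ⟶ SpecK k) (U : X.Opens), Nonempty U ∧
    Dense (U : Set X) ∧ IsSmoothOfRelativeDimension 1 q ∧
    Nonempty (U.toScheme ≅ pullback q (A1str k))

/-- Two schemes are birationally equivalent: they contain isomorphic dense open
subschemes. -/
def AreBirational (X Y : Scheme.{u}) : Prop :=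
  ∃ (U : X.Opens) (V : Y.Opens), Nonempty U ∧ Nonempty V ∧
    Dense (U : Set X) ∧ Dense (V : Set Y) ∧ Nonempty (U.toScheme ≅ V.toScheme)

/-- `X` is a rational variety of dimension `n` over `k`: it is birationally
equivalent to the affine space `𝔸ⁿ_k`. -/
def IsRationalVariety (k : Type u) [Field k] (n : ℕ) (X : Scheme.{u}) : Prop :=
  AreBirational X (Spec (CommRingCat.of (MvPolynomial (Fin n) k)))


open MvPolynomial in
/-- The locally nilpotent derivation `∂ = x ∂_y + 2y ∂_z` of `ℂ[x,y,z]`. -/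
def D17 : Derivation ℂ (MvPolynomial (Fin 3) ℂ) (MvPolynomial (Fin 3) ℂ) :=
  MvPolynomial.mkDerivation ℂ ![0, X 0, 2 * X 1]

open MvPolynomial

abbrev A3 := MvPolynomial (Fin 3) ℂ

lemma coeff_pderiv (i : Fin 3) (m : Fin 3 →₀ ℕ) (p : A3) :
    coeff m (pderiv i p) = (m i + 1 : ℂ) * coeff (m + Finsupp.single i 1) p := by
  induction p using MvPolynomial.induction_on' with
  | add p q hp hq => simp [hp, hq, mul_add]
  | monomial s a =>
    rw [pderiv_monomial]
    by_cases h : s = m + Finsupp.single i 1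
    · subst h
      have h1 : m + Finsupp.single i 1 - Finsupp.single i 1 = m := by
        ext a; by_cases ha : a = i <;> simp [ha]
      simp [coeff_monomial, h1]
      ring
    · rw [coeff_monomial, coeff_monomial, if_neg h, mul_zero]
      by_cases h2 : s - Finsupp.single i 1 = m
      · have hsi : s i = 0 := by
          by_contra hsi
          apply h
          rw [← h2]
          ext a; by_cases ha : a = i
          · simp [ha, Finsupp.single_apply]; omega
          · simp [Finsupp.single_apply, Ne.symm ha]
        rw [if_pos h2, hsi]; simp
      · rw [if_neg h2]

lemma D17_eq : D17 = (X 0 : A3) • (pderiv 1 : Derivation ℂ A3 A3) + (2 * X 1 : A3) • pderiv 2 := by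
  apply derivation_ext
  intro i
  fin_cases i <;>
    simp [D17, mkDerivation_X, pderiv_X, Finsupp.single_apply]

lemma D17_apply (p : A3) : D17 p = pderiv 1 p * X 0 + (C 2 * pderiv 2 p) * X 1 := by
  rw [D17_eq]
  simp [smul_eq_mul, map_ofNat]
  ring

def E (i j k : ℕ) : Fin 3 →₀ ℕ :=
  Finsupp.single 0 i + Finsupp.single 1 j + Finsupp.single 2 k

lemma E_apply0 (i j k : ℕ) : E i j k 0 = i := by simp [E, Finsupp.single_apply]
lemma E_apply1 (i j k : ℕ) : E i j k 1 = j := by simp [E, Finsupp.single_apply]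
lemma E_apply2 (i j k : ℕ) : E i j k 2 = k := by simp [E, Finsupp.single_apply]

lemma E_sub0 (i j k : ℕ) : E (i+1) j k - Finsupp.single 0 1 = E i j k := by
  ext a; fin_cases a <;> simp [E, Finsupp.single_apply]

lemma E_sub1 (i j k : ℕ) : E i (j+1) k - Finsupp.single 1 1 = E i j k := by
  ext a; fin_cases a <;> simp [E, Finsupp.single_apply]

lemma E_add1 (i j k : ℕ) : E i j k + Finsupp.single 1 1 = E i (j+1) k := by
  ext a; fin_cases a <;> simp [E, Finsupp.single_apply]

lemma E_add2 (i j k : ℕ) : E i j k + Finsupp.single 2 1 = E i j (k+1) := by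
  ext a; fin_cases a <;> simp [E, Finsupp.single_apply]

lemma mem_support0 (i j k : ℕ) : (0 : Fin 3) ∈ (E (i+1) j k).support := by
  simp [Finsupp.mem_support_iff, E_apply0]

lemma mem_support1 (i j k : ℕ) : (1 : Fin 3) ∈ (E i (j+1) k).support := by
  simp [Finsupp.mem_support_iff, E_apply1]

lemma not_mem_support0 (j k : ℕ) : (0 : Fin 3) ∉ (E 0 j k).support := by
  simp [Finsupp.mem_support_iff, E_apply0]

lemma rel0 (p : A3) (hp : D17 p = 0) (j k : ℕ) : coeff (E 0 j (k+1)) p = 0 := by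
  have h := congrArg (coeff (E 0 (j+1) k)) hp
  rw [D17_apply, coeff_add, coeff_mul_X', coeff_mul_X', if_neg (not_mem_support0 _ _),
    if_pos (mem_support1 _ _ _), E_sub1, coeff_C_mul, coeff_pderiv, E_add2, E_apply2,
    coeff_zero] at h
  have h2 : ((k : ℂ) + 1) ≠ 0 := Nat.cast_add_one_ne_zero k
  have h3 : (2:ℂ) * (((k:ℂ)+1) * coeff (E 0 j (k+1)) p) = 0 := by linear_combination h
  simpa [h2, mul_eq_zero] using h3

lemma rel1 (p : A3) (hp : D17 p = 0) (i j k : ℕ) :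
    ((j:ℂ)+2) * coeff (E i (j+2) k) p + 2 * ((k:ℂ)+1) * coeff (E (i+1) j (k+1)) p = 0 := by
  have h := congrArg (coeff (E (i+1) (j+1) k)) hp
  rw [D17_apply, coeff_add, coeff_mul_X', coeff_mul_X', if_pos (mem_support0 _ _ _),
    if_pos (mem_support1 _ _ _), E_sub0, E_sub1, coeff_C_mul, coeff_pderiv, coeff_pderiv,
    E_add1, E_add2, E_apply1, E_apply2, coeff_zero] at h
  push_cast at h ⊢
  linear_combination h

lemma vanish (p : A3) (hp : D17 p = 0) : ∀ i j k, i < k → coeff (E i j k) p = 0 := by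
  intro i
  induction i with
  | zero =>
    intro j k hk
    obtain ⟨k', rfl⟩ : ∃ k', k = k' + 1 := ⟨k - 1, by omega⟩
    exact rel0 p hp j k'
  | succ i ih =>
    intro j k hk
    obtain ⟨k', rfl⟩ : ∃ k', k = k' + 1 := ⟨k - 1, by omega⟩
    have h := rel1 p hp i j k'
    rw [ih (j+2) k' (by omega)] at h
    have h2 : (2 : ℂ) * ((k' : ℂ) + 1) ≠ 0 := by
      have : ((k' : ℂ) + 1) ≠ 0 := Nat.cast_add_one_ne_zero k'
      simp [this]
    have h3 : 2 * ((k':ℂ)+1) * coeff (E (i+1) j (k'+1)) p = 0 := by linear_combination h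
    rcases mul_eq_zero.1 h3 with h4 | h4
    · exact absurd h4 h2
    · exact h4

lemma fin3_decomp (m : Fin 3 →₀ ℕ) : m = E (m 0) (m 1) (m 2) := by
  ext a; fin_cases a <;> simp [E, Finsupp.single_apply]

lemma support_cond (p : A3) (hp : D17 p = 0) (m : Fin 3 →₀ ℕ) (hm : m ∈ p.support) :
    m 2 ≤ m 0 := by
  by_contra h
  apply MvPolynomial.mem_support_iff.1 hm
  rw [fin3_decomp m]
  exact vanish p hp _ _ _ (by omega)

@[simp] lemma D17_X0 : D17 (X 0) = 0 := by simp [D17, mkDerivation_X]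
@[simp] lemma D17_X1 : D17 (X 1) = X 0 := by simp [D17, mkDerivation_X]
@[simp] lemma D17_X2 : D17 (X 2) = 2 * X 1 := by simp [D17, mkDerivation_X]

def ev : A3 →ₐ[ℂ] A3 := aeval ![X 0, X 1, X 0 * X 2 - X 1 ^ 2]

@[simp] lemma ev_X0 : ev (X 0) = X 0 := by simp [ev]
@[simp] lemma ev_X1 : ev (X 1) = X 1 := by simp [ev]
@[simp] lemma ev_X2 : ev (X 2) = X 0 * X 2 - X 1 ^ 2 := by simp [ev]

lemma D17_ev (r : A3) : D17 (ev r) = ev (X 0 * pderiv 1 r) := by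
  induction r using MvPolynomial.induction_on with
  | C a => rw [← MvPolynomial.algebraMap_eq]; simp [Derivation.map_algebraMap]
  | add p q hp hq => simp only [map_add, mul_add, hp, hq]
  | mul_X p i hp =>
    rw [map_mul, Derivation.leibniz, hp, pderiv_mul, mul_add, map_add, map_mul, map_mul]
    fin_cases i <;>
      simp [smul_eq_mul, pderiv_X, Finsupp.single_apply] <;> ring

-- injectivity of ev
lemma ev_injective : Function.Injective (ev : A3 → A3) := by
  set K := FractionRing A3
  set ι : A3 →+* K := algebraMap A3 K with hι
  have hx : ι (X 0) ≠ 0 := fun h => by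
    exact X_ne_zero 0 ((map_eq_zero_iff ι (IsFractionRing.injective A3 K)).1 h)
  set θ : A3 →+* K := eval₂Hom (ι.comp MvPolynomial.C)
    ![ι (X 0), ι (X 1), (ι (X 2) + ι (X 1) ^ 2) * (ι (X 0))⁻¹] with hθ
  have key : θ.comp (ev : A3 →+* A3) = ι := by
    apply MvPolynomial.ringHom_ext
    · intro a
      simp [θ, ev, hι]
    · intro i
      fin_cases i <;> simp [θ, ev, map_sub, map_mul, map_pow]
      rw [mul_comm, mul_assoc, inv_mul_cancel₀ hx, mul_one]; ring
  intro a b hab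
  apply IsFractionRing.injective A3 K
  have := congrArg θ hab
  calc ι a = θ (ev a) := by rw [← key]; rfl
  _ = θ (ev b) := this
  _ = ι b := by rw [← key]; rfl

lemma monomial_E (i j k : ℕ) (c : ℂ) :
    monomial (E i j k) c = C c * X 0 ^ i * X 1 ^ j * X 2 ^ k := by
  rw [X_pow_eq_monomial, X_pow_eq_monomial, X_pow_eq_monomial, C_apply,
    monomial_mul, monomial_mul, monomial_mul]
  simp [E]

lemma aux_mon (i j k : ℕ) (h : k ≤ i) (c : ℂ) :
    C c * X 0 ^ (i - k) * X 1 ^ j * (X 0 * X 2 : A3) ^ k = monomial (E i j k) c := by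
  rw [monomial_E, ← pow_sub_mul_pow (X 0 : A3) h, mul_pow]
  ring

lemma mem_range_ev (p : A3) (hsupp : ∀ m ∈ p.support, m 2 ≤ m 0) : ∃ r, ev r = p := by
  refine ⟨∑ m ∈ p.support, C (coeff m p) * X 0 ^ (m 0 - m 2) * X 1 ^ (m 1) *
    (X 2 + X 1 ^ 2) ^ (m 2), ?_⟩
  rw [map_sum]
  conv_rhs => rw [p.as_sum]
  refine Finset.sum_congr rfl fun m hm => ?_
  have h2 := hsupp m hm
  have hu : ev (X 2 + X 1 ^ 2) = X 0 * X 2 := by simp [ev]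
  rw [map_mul, map_mul, map_mul, map_pow, map_pow, map_pow, hu]
  simp only [ev, aeval_C, aeval_X, algebraMap_eq]
  calc C (coeff m p) * (![X 0, X 1, X 0 * X 2 - X 1 ^ 2] 0) ^ (m 0 - m 2) *
        (![X 0, X 1, X 0 * X 2 - X 1 ^ 2] 1) ^ (m 1) * (X 0 * X 2) ^ (m 2)
      = C (coeff m p) * X 0 ^ (m 0 - m 2) * X 1 ^ (m 1) * (X 0 * X 2) ^ (m 2) := by
        norm_num
  _ = monomial (E (m 0) (m 1) (m 2)) (coeff m p) := aux_mon _ _ _ h2 _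
  _ = monomial m (coeff m p) := by rw [← fin3_decomp]

@[simp] lemma D17_two : D17 (2 : A3) = 0 := by
  have h : (2 : A3) = algebraMap ℂ A3 2 := by simp [algebraMap_eq, map_ofNat]
  rw [h, Derivation.map_algebraMap]

lemma D17_adjoin (p : A3) (hp : p ∈ Algebra.adjoin ℂ ({X 0 * X 2 - X 1 ^ 2, X 0} : Set A3)) :
    D17 p = 0 := by
  induction hp using Algebra.adjoin_induction with
  | mem x hx =>
    rcases hx with rfl | rfl
    · rw [map_sub, pow_two, Derivation.leibniz, Derivation.leibniz]
      simp [smul_eq_mul]; ring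
    · simp
  | algebraMap r => simp [Derivation.map_algebraMap]
  | add x y hx hy hx' hy' => simp [hx', hy']
  | mul x y hx hy hx' hy' => simp [Derivation.leibniz, hx', hy']

lemma nilp_mul : ∀ n : ℕ, ∀ a b : ℕ, ∀ p q : A3, (D17.toLinearMap ^ a) p = 0 →
    (D17.toLinearMap ^ b) q = 0 → a + b = n + 1 → (D17.toLinearMap ^ n) (p * q) = 0 := by
  intro n
  induction n with
  | zero =>
    intro a b p q hp hq hab
    rcases Nat.eq_zero_or_pos a with rfl | ha
    · rw [pow_zero] at hp; simp at hp; simp [hp]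
    · have hb : b = 0 := by omega
      subst hb
      rw [pow_zero] at hq; simp at hq; simp [hq]
  | succ n ih =>
    intro a b p q hp hq hab
    rcases Nat.eq_zero_or_pos a with rfl | ha
    · rw [pow_zero] at hp; simp at hp; simp [hp]
    rcases Nat.eq_zero_or_pos b with rfl | hb
    · rw [pow_zero] at hq; simp at hq; simp [hq]
    obtain ⟨a', rfl⟩ : ∃ a', a = a' + 1 := ⟨a - 1, by omega⟩
    obtain ⟨b', rfl⟩ : ∃ b', b = b' + 1 := ⟨b - 1, by omega⟩
    have step : ∀ c : ℕ, ∀ r : A3, (D17.toLinearMap ^ (c + 1)) r = (D17.toLinearMap ^ c) (D17 r) := by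
      intro c r
      rw [pow_succ]
      rfl
    rw [step n]
    rw [Derivation.leibniz, smul_eq_mul, smul_eq_mul, map_add]
    have h1 : (D17.toLinearMap ^ n) (p * D17 q) = 0 := by
      apply ih (a' + 1) b' p (D17 q) hp _ (by omega)
      rw [← step b' q]; exact hq
    have h2 : (D17.toLinearMap ^ n) (q * D17 p) = 0 := by
      apply ih (b' + 1) a' q (D17 p) hq _ (by omega)
      rw [← step a' p]; exact hp
    rw [h1, h2, add_zero]

lemma D17_locally_nilpotent (p : A3) : ∃ n : ℕ, (D17.toLinearMap ^ n) p = 0 := by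
  have step : ∀ c : ℕ, ∀ r : A3, (D17.toLinearMap ^ (c + 1)) r = (D17.toLinearMap ^ c) (D17 r) := by
    intro c r; rw [pow_succ]; rfl
  induction p using MvPolynomial.induction_on with
  | C a =>
    exact ⟨1, by rw [step 0]; rw [← MvPolynomial.algebraMap_eq]; simp [Derivation.map_algebraMap]⟩
  | add p q hp hq =>
    obtain ⟨a, ha⟩ := hp; obtain ⟨b, hb⟩ := hq
    refine ⟨a + b, ?_⟩
    rw [map_add]
    have h1 : (D17.toLinearMap ^ (a + b)) p = 0 := by
      rw [add_comm, pow_add, Module.End.mul_apply, ha, map_zero]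
    have h2 : (D17.toLinearMap ^ (a + b)) q = 0 := by
      rw [pow_add, Module.End.mul_apply, hb, map_zero]
    rw [h1, h2, add_zero]
  | mul_X p i hp =>
    obtain ⟨a, ha⟩ := hp
    have hXi : ∃ b : ℕ, (D17.toLinearMap ^ b) (X i : A3) = 0 := by
      fin_cases i
      · exact ⟨1, by rw [step 0]; simp⟩
      · exact ⟨2, by rw [step 1, step 0]; simp⟩
      · refine ⟨3, ?_⟩
        show (D17.toLinearMap ^ 3) (X 2 : A3) = 0
        rw [step 2]
        have : D17 (X 2 : A3) = 2 * X 1 := D17_X2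
        rw [this, step 1]
        have h2 : D17 (2 * X 1 : A3) = 2 * X 0 := by
          rw [Derivation.leibniz]
          simp [smul_eq_mul]
        rw [h2, step 0]
        have h3 : D17 (2 * X 0 : A3) = 0 := by
          rw [Derivation.leibniz]; simp
        rw [h3, map_zero]
    obtain ⟨b, hb⟩ := hXi
    have hb' : (D17.toLinearMap ^ (b+1)) (X i : A3) = 0 := by
      rw [pow_succ', Module.End.mul_apply, hb, map_zero]
    exact ⟨a + b, nilp_mul _ a (b+1) _ _ ha hb' (by omega)⟩


lemma support_m1 (r : A3) (h : pderiv 1 r = 0) : ∀ m ∈ r.support, m 1 = 0 := by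
  intro m hm
  by_contra hj
  obtain ⟨j, hjj⟩ : ∃ j, m 1 = j + 1 := ⟨m 1 - 1, by omega⟩
  apply MvPolynomial.mem_support_iff.1 hm
  have h0 := congrArg (coeff (E (m 0) j (m 2))) h
  rw [coeff_pderiv, E_apply1, E_add1, coeff_zero] at h0
  have hne : ((j:ℂ)+1) ≠ 0 := Nat.cast_add_one_ne_zero j
  have hz : coeff (E (m 0) (j+1) (m 2)) r = 0 := by
    rcases mul_eq_zero.1 h0 with h' | h'
    · exact absurd h' hne
    · exact h'
  rw [fin3_decomp m, hjj]
  exact hz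

lemma mem_adjoin_of_no_X1 (r : A3) (hr : ∀ m ∈ r.support, m 1 = 0) :
    ev r ∈ Algebra.adjoin ℂ ({X 0 * X 2 - X 1 ^ 2, X 0} : Set A3) := by
  have hsum : ev r = ∑ m ∈ r.support, ev (monomial m (coeff m r)) := by
    conv_lhs => rw [r.as_sum]
    rw [map_sum]
  rw [hsum]
  apply Subalgebra.sum_mem
  intro m hm
  have h1 : monomial m (coeff m r) = monomial (E (m 0) 0 (m 2)) (coeff m r) := by
    rw [← hr m hm, ← fin3_decomp]
  rw [h1, monomial_E, map_mul, map_mul, map_mul, map_pow, map_pow, map_pow,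
    ev_X0, ev_X1, ev_X2, pow_zero, mul_one]
  refine mul_mem (mul_mem ?_ ?_) ?_
  · have : ev (C (coeff m r)) = algebraMap ℂ A3 (coeff m r) := by
      simp [ev, algebraMap_eq]
    rw [this]
    exact Subalgebra.algebraMap_mem _ _
  · exact pow_mem (Algebra.subset_adjoin (by simp)) _
  · exact pow_mem (Algebra.subset_adjoin (by simp)) _

lemma ker_forward (p : A3) (hp : D17 p = 0) :
    p ∈ Algebra.adjoin ℂ ({X 0 * X 2 - X 1 ^ 2, X 0} : Set A3) := by
  obtain ⟨r, hr⟩ := mem_range_ev p (support_cond p hp)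
  have h1 : ev (X 0 * pderiv 1 r) = 0 := by rw [← D17_ev, hr, hp]
  have h2 : (X 0 : A3) * pderiv 1 r = 0 := ev_injective (by rw [h1, map_zero])
  have h3 : pderiv 1 r = 0 := by
    rcases mul_eq_zero.1 h2 with h' | h'
    · exact absurd h' (X_ne_zero 0)
    · exact h'
  rw [← hr]
  exact mem_adjoin_of_no_X1 r (support_m1 r h3)


open MvPolynomial in
/-- For `∂ = x ∂_y + 2y ∂_z` on `ℂ[x,y,z]` one has
`ker ∂ = ℂ[xz - y², x]`, `∂` is locally nilpotent, and the morphism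
`𝔸³ → ℙ¹, (x,y,z) ↦ [(xz - y²)x² + 1 : (xz - y²)³]` factors as the quotient morphism
`ρ : 𝔸³ → 𝔸² = Spec ℂ[u,v]`, `(x,y,z) ↦ (xz - y², x)` followed by
`h : 𝔸² → ℙ¹`, `(u,v) ↦ [uv² + 1 : u³]` (the factorization being expressed by the
identities `ρ^*(uv² + 1) = (xz - y²)x² + 1` and `ρ^*(u³) = (xz - y²)³`). -/
theorem kernel_of_x_dy_plus_2y_dz_and_factorization :
    (∀ p : MvPolynomial (Fin 3) ℂ,
      D17 p = 0 ↔ p ∈ Algebra.adjoin ℂ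
        ({X 0 * X 2 - X 1 ^ 2, X 0} : Set (MvPolynomial (Fin 3) ℂ))) ∧
    (∀ p : MvPolynomial (Fin 3) ℂ, ∃ n : ℕ, (D17.toLinearMap ^ n) p = 0) ∧
    (aeval (![X 0 * X 2 - X 1 ^ 2, X 0] : Fin 2 → MvPolynomial (Fin 3) ℂ)
        ((X 0 * X 1 ^ 2 + 1 : MvPolynomial (Fin 2) ℂ)) =
      (X 0 * X 2 - X 1 ^ 2) * X 0 ^ 2 + 1) ∧
    (aeval (![X 0 * X 2 - X 1 ^ 2, X 0] : Fin 2 → MvPolynomial (Fin 3) ℂ) ((X 0 ^ 3 : MvPolynomial (Fin 2) ℂ)) =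
      (X 0 * X 2 - X 1 ^ 2) ^ 3) := by
  refine ⟨?_, D17_locally_nilpotent, ?_, ?_⟩
  · intro p
    exact ⟨ker_forward p, fun h => D17_adjoin p h⟩
  · simp [aeval_X]
    try ring
  · simp [aeval_X]
    try ring

end Paper
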